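/- arXiv:1807.01590 — 2 statements merged into one kernel-verified Lean document; each statement's English description precedes it below -/
import Mathlib

section
/- Let K ⊆ ℝⁿ be a compact convex set with 0 in its interior whose gauge γ is strictly convex and continuously differentiable on ℝⁿ ∖ {0}, let U ⊆ ℝⁿ be a bounded open set with nonempty boundary, and let φ : ℝⁿ → ℝ be continuously differentiable and satisfy the strict Lipschitz property. Let x ∈ U. Then ρ is differentiable at x if and only if x has a unique ρ-closest point on ∂U; and in that case, if y denotes that unique ρ-closest point, ∇ρ(x) = ∇γ(x − y). In particular, in that case ∇ρ(x) ≠ 0. -/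
open Set Filter Topology MeasureTheory
open scoped NNReal

noncomputable section

abbrev Euc (n : ℕ) := EuclideanSpace ℝ (Fin n)

/-- The real inner product. -/
noncomputable def rinner {n : ℕ} (x y : Euc n) : ℝ := inner ℝ x y

/-- The polar set `K° = {x | ⟨x, y⟩ ≤ 1 for all y ∈ K}`. -/
def polarSet {n : ℕ} (K : Set (Euc n)) : Set (Euc n) :=
  {x | ∀ y ∈ K, rinner x y ≤ 1}

/-- `rho K U φ x = min_{y ∈ ∂U} (γ_K(x - y) + φ y)`. -/
noncomputable def rho {n : ℕ} (K U : Set (Euc n)) (φ : Euc n → ℝ) (x : Euc n) : ℝ :=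
  sInf ((fun y => gauge K (x - y) + φ y) '' frontier U)

/-- `rhoBar K U φ x = min_{y ∈ ∂U} (γ_K(y - x) - φ y)`. -/
noncomputable def rhoBar {n : ℕ} (K U : Set (Euc n)) (φ : Euc n → ℝ) (x : Euc n) : ℝ :=
  sInf ((fun y => gauge K (y - x) - φ y) '' frontier U)

/-- `φ` satisfies the strict Lipschitz property with respect to the gauge of `K`. -/
def StrictLipschitzWrt {n : ℕ} (K : Set (Euc n)) (φ : Euc n → ℝ) : Prop :=
  ∀ x y : Euc n, x ≠ y → -gauge K (y - x) < φ x - φ y ∧ φ x - φ y < gauge K (x - y)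

/-- The gauge of `K` is strictly convex: `γ(x+y) < γ(x) + γ(y)` unless
`x = c • y` or `y = c • x` for some `c ≥ 0`. -/
def StrictlyConvexGauge {n : ℕ} (K : Set (Euc n)) : Prop :=
  ∀ x y : Euc n, (¬ ∃ c : ℝ, 0 ≤ c ∧ (x = c • y ∨ y = c • x)) →
    gauge K (x + y) < gauge K x + gauge K y

section Helpers

variable {n : ℕ} {K : Set (Euc n)}

lemma hK_nhds (hK0 : (0 : Euc n) ∈ interior K) : K ∈ 𝓝 0 :=
  mem_interior_iff_mem_nhds.mp hK0

lemma gauge_cont (hKconv : Convex ℝ K) (hK0 : (0 : Euc n) ∈ interior K) :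
    Continuous (gauge K) := continuous_gauge hKconv (hK_nhds hK0)

lemma gauge_pos'' (hKcpt : IsCompact K) (hK0 : (0 : Euc n) ∈ interior K)
    {u : Euc n} (hu : u ≠ 0) : 0 < gauge K u :=
  (gauge_pos (absorbent_nhds_zero (hK_nhds hK0))
    (NormedSpace.isVonNBounded_of_isBounded _ hKcpt.isBounded)).mpr hu

lemma gauge_sub_le' (hKconv : Convex ℝ K) (hK0 : (0 : Euc n) ∈ interior K)
    (a b : Euc n) : gauge K a - gauge K b ≤ gauge K (a - b) := by
  have h := gauge_add_le hKconv (absorbent_nhds_zero (hK_nhds hK0)) (a - b) b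
  rw [sub_add_cancel] at h
  linarith

lemma gauge_le_C (hK0 : (0 : Euc n) ∈ interior K) :
    ∃ C : ℝ, 0 < C ∧ ∀ z : Euc n, gauge K z ≤ C * ‖z‖ := by
  obtain ⟨r, hr, hball⟩ := Metric.mem_nhds_iff.mp (hK_nhds hK0)
  refine ⟨r⁻¹, by positivity, fun z => ?_⟩
  have h := gauge_mono (absorbent_ball_zero hr) hball z
  rw [gauge_ball hr.le] at h
  rw [div_eq_inv_mul] at h
  exact h

lemma gauge_convexOn (hKconv : Convex ℝ K) (hK0 : (0 : Euc n) ∈ interior K) :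
    ConvexOn ℝ univ (gauge K) := by
  refine ⟨convex_univ, fun p _ q _ a b ha hb hab => ?_⟩
  calc gauge K (a • p + b • q) ≤ gauge K (a • p) + gauge K (b • q) :=
        gauge_add_le hKconv (absorbent_nhds_zero (hK_nhds hK0)) _ _
    _ = a * gauge K p + b * gauge K q := by
        rw [gauge_smul_of_nonneg ha, gauge_smul_of_nonneg hb]; rfl

lemma gauge_support (hKconv : Convex ℝ K) (hK0 : (0 : Euc n) ∈ interior K)
    {u : Euc n} {L : Euc n →L[ℝ] ℝ} (hL : HasFDerivAt (gauge K) L u) (w : Euc n) :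
    gauge K u + L (w - u) ≤ gauge K w := by
  rcases eq_or_ne w u with rfl | hwu
  · simp
  set ψ : ℝ → Euc n := fun t => u + t • (w - u) with hψdef
  have h0 : ψ 0 = u := by simp [hψdef]
  have h1 : ψ 1 = w := by simp [hψdef]
  have hψd : HasDerivAt ψ (w - u) 0 := by
    simpa [hψdef] using ((hasDerivAt_id (0 : ℝ)).smul_const (w - u)).const_add u
  have hcomp : HasDerivAt (fun t => gauge K (ψ t)) (L (w - u)) 0 := by
    have := (h0 ▸ hL).comp_hasDerivAt 0 hψd
    exact this
  have hconv1 : ConvexOn ℝ univ (fun t : ℝ => gauge K (ψ t)) := by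
    have h2 := (gauge_convexOn hKconv hK0).comp_affineMap (AffineMap.lineMap u w)
    have : (gauge K ∘ (AffineMap.lineMap u w)) = fun t : ℝ => gauge K (ψ t) := by
      funext t
      simp [AffineMap.lineMap_apply, hψdef, add_comm]
    rw [this] at h2
    simpa using h2
  have hs := hconv1.le_slope_of_hasDerivAt (mem_univ (0:ℝ)) (mem_univ (1:ℝ))
    one_pos hcomp
  rw [slope_def_field] at hs
  simp [h0, h1] at hs
  have hmap : L (w - u) = L w - L u := map_sub L w u
  linarith

lemma gauge_euler {u : Euc n} {L : Euc n →L[ℝ] ℝ}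
    (hL : HasFDerivAt (gauge K) L u) : L u = gauge K u := by
  have hsm : HasDerivAt (fun t : ℝ => t • u) u 1 := by
    simpa using (hasDerivAt_id (1 : ℝ)).smul_const u
  have h1u : (1 : ℝ) • u = u := one_smul _ _
  have h1 : HasDerivAt (fun t : ℝ => gauge K (t • u)) (L u) 1 := by
    have := (h1u ▸ hL).comp_hasDerivAt 1 hsm
    exact this
  have h2 : (fun t : ℝ => gauge K (t • u)) =ᶠ[𝓝 (1 : ℝ)] fun t => t * gauge K u := by
    filter_upwards [Ioi_mem_nhds (zero_lt_one)] with t ht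
    rw [gauge_smul_of_nonneg (le_of_lt ht)]; rfl
  have h3 : HasDerivAt (fun t : ℝ => t * gauge K u) (gauge K u) 1 := by
    simpa using (hasDerivAt_id (1 : ℝ)).mul_const (gauge K u)
  exact (h1.congr_of_eventuallyEq h2.symm).unique h3

lemma gauge_hasFDerivAt (hKC1 : ContDiffOn ℝ 1 (gauge K) {(0 : Euc n)}ᶜ)
    {u : Euc n} (hu : u ≠ 0) :
    HasFDerivAt (gauge K) (fderiv ℝ (gauge K) u) u := by
  have := (hKC1.contDiffAt (isOpen_compl_singleton.mem_nhds hu)).differentiableAt one_ne_zero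
  exact this.hasFDerivAt

end Helpers
section RhoBasic

variable {n : ℕ} {K U : Set (Euc n)} {φ : Euc n → ℝ}

lemma frontier_cpt (hUbdd : Bornology.IsBounded U) : IsCompact (frontier U) :=
  Metric.isCompact_of_isClosed_isBounded isClosed_frontier
    (hUbdd.closure.subset frontier_subset_closure)

lemma rho_exists_min (hKconv : Convex ℝ K) (hK0 : (0 : Euc n) ∈ interior K)
    (hφc : Continuous φ) (hUbdd : Bornology.IsBounded U) (hUfr : (frontier U).Nonempty)
    (x : Euc n) :
    ∃ y, y ∈ frontier U ∧ rho K U φ x = gauge K (x - y) + φ y ∧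
      ∀ w ∈ frontier U, gauge K (x - y) + φ y ≤ gauge K (x - w) + φ w := by
  have cont : Continuous fun y => gauge K (x - y) + φ y :=
    ((gauge_cont hKconv hK0).comp (continuous_const.sub continuous_id)).add hφc
  obtain ⟨y, hyfr, hmin⟩ := (frontier_cpt hUbdd).exists_isMinOn hUfr cont.continuousOn
  have hleast : IsLeast ((fun y => gauge K (x - y) + φ y) '' frontier U)
      (gauge K (x - y) + φ y) := by
    refine ⟨mem_image_of_mem _ hyfr, ?_⟩
    rintro a ⟨w, hw, rfl⟩
    exact hmin hw
  exact ⟨y, hyfr, hleast.csInf_eq, fun w hw => hleast.2 (mem_image_of_mem _ hw)⟩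

lemma rho_le (hKconv : Convex ℝ K) (hK0 : (0 : Euc n) ∈ interior K)
    (hφc : Continuous φ) (hUbdd : Bornology.IsBounded U) (hUfr : (frontier U).Nonempty)
    (x : Euc n) {y : Euc n} (hy : y ∈ frontier U) :
    rho K U φ x ≤ gauge K (x - y) + φ y := by
  obtain ⟨y₀, hy₀, heq, hmin⟩ := rho_exists_min hKconv hK0 hφc hUbdd hUfr x
  rw [heq]
  exact hmin y hy

lemma rho_sub_le (hKconv : Convex ℝ K) (hK0 : (0 : Euc n) ∈ interior K)
    (hφc : Continuous φ) (hUbdd : Bornology.IsBounded U) (hUfr : (frontier U).Nonempty)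
    (x z : Euc n) : rho K U φ z - rho K U φ x ≤ gauge K (z - x) := by
  obtain ⟨y₀, hy₀, heq, hmin⟩ := rho_exists_min hKconv hK0 hφc hUbdd hUfr x
  have h1 : rho K U φ z ≤ gauge K (z - y₀) + φ y₀ := rho_le hKconv hK0 hφc hUbdd hUfr z hy₀
  have h2 : gauge K (z - y₀) - gauge K (x - y₀) ≤ gauge K (z - x) := by
    have := gauge_sub_le' hKconv hK0 (z - y₀) (x - y₀)
    rwa [sub_sub_sub_cancel_right] at this
  rw [heq]
  linarith

lemma mem_frontier_ne (hUopen : IsOpen U) {x y : Euc n} (hx : x ∈ U)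
    (hy : y ∈ frontier U) : x - y ≠ 0 := by
  rw [sub_ne_zero]
  rintro rfl
  rw [hUopen.frontier_eq] at hy
  exact hy.2 hx

lemma rho_hasFDerivAt_upper (hKC1 : ContDiffOn ℝ 1 (gauge K) {(0 : Euc n)}ᶜ)
    {x y : Euc n} (hxy : x - y ≠ 0) :
    HasFDerivAt (fun z => gauge K (z - y) + φ y) (fderiv ℝ (gauge K) (x - y)) x := by
  have hγ := gauge_hasFDerivAt hKC1 hxy
  have := hγ.comp x ((hasFDerivAt_id x).sub_const y)
  simpa using this.add_const (φ y)

lemma fderiv_rho_eq (hKconv : Convex ℝ K) (hK0 : (0 : Euc n) ∈ interior K)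
    (hKC1 : ContDiffOn ℝ 1 (gauge K) {(0 : Euc n)}ᶜ)
    (hUopen : IsOpen U) (hUbdd : Bornology.IsBounded U) (hUfr : (frontier U).Nonempty)
    (hφc : Continuous φ)
    {x y : Euc n} (hx : x ∈ U) (hy : y ∈ frontier U)
    (heq : rho K U φ x = gauge K (x - y) + φ y)
    {Lr : Euc n →L[ℝ] ℝ} (hr : HasFDerivAt (rho K U φ) Lr x) :
    Lr = fderiv ℝ (gauge K) (x - y) := by
  have hxy := mem_frontier_ne hUopen hx hy
  have hcomp := rho_hasFDerivAt_upper (φ := φ) hKC1 hxy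
  have hmin : IsLocalMin (fun z => gauge K (z - y) + φ y - rho K U φ z) x := by
    apply Filter.Eventually.of_forall
    intro z
    have h1 := rho_le hKconv hK0 hφc hUbdd hUfr z hy
    simp only [heq]
    linarith
  have h0 := hmin.hasFDerivAt_eq_zero (hcomp.sub hr)
  have := sub_eq_zero.mp h0
  exact this.symm

end RhoBasic
section RhoUnique

variable {n : ℕ} {K U : Set (Euc n)} {φ : Euc n → ℝ}

/-- If two minimizers have proportional direction vectors, they coincide. -/
lemma prop_case (hKcpt : IsCompact K) (hK0 : (0 : Euc n) ∈ interior K)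
    (hUopen : IsOpen U) (hφlip : StrictLipschitzWrt K φ)
    {x y₁ y₂ : Euc n} (hx : x ∈ U) (hy₁ : y₁ ∈ frontier U) (hy₂ : y₂ ∈ frontier U)
    (heq₁ : rho K U φ x = gauge K (x - y₁) + φ y₁)
    (heq₂ : rho K U φ x = gauge K (x - y₂) + φ y₂)
    {c : ℝ} (hc : 0 ≤ c) (hprop : x - y₂ = c • (x - y₁)) : y₁ = y₂ := by
  have hu : x - y₁ ≠ 0 := mem_frontier_ne hUopen hx hy₁
  have hv : x - y₂ ≠ 0 := mem_frontier_ne hUopen hx hy₂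
  have hgu : 0 < gauge K (x - y₁) := gauge_pos'' hKcpt hK0 hu
  have hval : φ y₁ - φ y₂ = (c - 1) * gauge K (x - y₁) := by
    have h2 : gauge K (x - y₂) = c * gauge K (x - y₁) := by
      rw [hprop, gauge_smul_of_nonneg hc]; rfl
    rw [heq₂, h2] at heq₁
    linarith
  have hyy : y₁ - y₂ = (c - 1) • (x - y₁) := by
    have : y₁ - y₂ = (x - y₂) - (x - y₁) := by abel
    rw [this, hprop]
    module
  rcases lt_trichotomy c 1 with hc1 | hc1 | hc1
  · exfalso
    have hne : y₁ ≠ y₂ := by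
      intro h
      have h0 : y₁ - y₂ = 0 := by rw [h, sub_self]
      rw [hyy] at h0
      rcases smul_eq_zero.mp h0 with h' | h'
      · linarith
      · exact hu h'
    have hlip := (hφlip y₁ y₂ hne).1
    have hg : gauge K (y₂ - y₁) = (1 - c) * gauge K (x - y₁) := by
      have : y₂ - y₁ = (1 - c) • (x - y₁) := by rw [← neg_sub y₁ y₂, hyy]; module
      rw [this, gauge_smul_of_nonneg (by linarith : (0:ℝ) ≤ 1 - c)]; rfl
    rw [hg] at hlip
    nlinarith [hval]
  · have h0 : y₁ - y₂ = 0 := by rw [hyy, hc1, sub_self, zero_smul]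
    exact sub_eq_zero.mp h0
  · exfalso
    have hne : y₁ ≠ y₂ := by
      intro h
      have h0 : y₁ - y₂ = 0 := by rw [h, sub_self]
      rw [hyy] at h0
      rcases smul_eq_zero.mp h0 with h' | h'
      · linarith
      · exact hu h'
    have hlip := (hφlip y₁ y₂ hne).2
    have hg : gauge K (y₁ - y₂) = (c - 1) * gauge K (x - y₁) := by
      rw [hyy, gauge_smul_of_nonneg (by linarith : (0:ℝ) ≤ c - 1)]; rfl
    rw [hg] at hlip
    linarith [hval]

lemma unique_min (hKcpt : IsCompact K) (hKconv : Convex ℝ K)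
    (hK0 : (0 : Euc n) ∈ interior K) (hKstrict : StrictlyConvexGauge K)
    (hKC1 : ContDiffOn ℝ 1 (gauge K) {(0 : Euc n)}ᶜ)
    (hUopen : IsOpen U) (hUbdd : Bornology.IsBounded U) (hUfr : (frontier U).Nonempty)
    (hφc : Continuous φ) (hφlip : StrictLipschitzWrt K φ)
    {x : Euc n} (hx : x ∈ U) (hdiff : DifferentiableAt ℝ (rho K U φ) x)
    {y₁ y₂ : Euc n} (hy₁ : y₁ ∈ frontier U) (hy₂ : y₂ ∈ frontier U)
    (heq₁ : rho K U φ x = gauge K (x - y₁) + φ y₁)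
    (heq₂ : rho K U φ x = gauge K (x - y₂) + φ y₂) : y₁ = y₂ := by
  have hu : x - y₁ ≠ 0 := mem_frontier_ne hUopen hx hy₁
  have hv : x - y₂ ≠ 0 := mem_frontier_ne hUopen hx hy₂
  have hL₁ := fderiv_rho_eq hKconv hK0 hKC1 hUopen hUbdd hUfr hφc hx hy₁ heq₁
      hdiff.hasFDerivAt
  have hL₂ := fderiv_rho_eq hKconv hK0 hKC1 hUopen hUbdd hUfr hφc hx hy₂ heq₂
      hdiff.hasFDerivAt
  set L := fderiv ℝ (rho K U φ) x with hLdef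
  by_cases hprop : ∃ c : ℝ, 0 ≤ c ∧ ((x - y₁) = c • (x - y₂) ∨ (x - y₂) = c • (x - y₁))
  · obtain ⟨c, hc, h | h⟩ := hprop
    · exact (prop_case hKcpt hK0 hUopen hφlip hx hy₂ hy₁ heq₂ heq₁ hc h).symm
    · exact prop_case hKcpt hK0 hUopen hφlip hx hy₁ hy₂ heq₁ heq₂ hc h
  · exfalso
    have hstrict := hKstrict (x - y₁) (x - y₂) hprop
    have hγ₁ : HasFDerivAt (gauge K) L (x - y₁) := hL₁ ▸ gauge_hasFDerivAt hKC1 hu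
    have hγ₂ : HasFDerivAt (gauge K) L (x - y₂) := hL₂ ▸ gauge_hasFDerivAt hKC1 hv
    have heuler₂ : L (x - y₂) = gauge K (x - y₂) := gauge_euler hγ₂
    have hsupp := gauge_support hKconv hK0 hγ₁ ((x - y₁) + (x - y₂))
    rw [add_sub_cancel_left, heuler₂] at hsupp
    linarith

end RhoUnique
section RhoStab

variable {n : ℕ} {K U : Set (Euc n)} {φ : Euc n → ℝ}

lemma min_stability (hKconv : Convex ℝ K)
    (hK0 : (0 : Euc n) ∈ interior K)
    (hUbdd : Bornology.IsBounded U) (hUfr : (frontier U).Nonempty)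
    (hφc : Continuous φ)
    {x y : Euc n} (hy : y ∈ frontier U)
    (huniq : ∀ w ∈ frontier U, rho K U φ x = gauge K (x - w) + φ w → w = y)
    {ε : ℝ} (hε : 0 < ε) :
    ∃ δ > 0, ∀ z : Euc n, ‖z - x‖ < δ → ∀ w ∈ frontier U,
      rho K U φ z = gauge K (z - w) + φ w → ‖w - y‖ < ε := by
  obtain ⟨C, hC, hCb⟩ := gauge_le_C hK0
  set S := frontier U ∩ (Metric.ball y ε)ᶜ with hSdef
  have hmemS : ∀ w, w ∈ frontier U → ¬ ‖w - y‖ < ε → w ∈ S := by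
    intro w hw h
    exact ⟨hw, by simpa [Metric.mem_ball, dist_eq_norm] using h⟩
  rcases S.eq_empty_or_nonempty with hS | hS
  · refine ⟨1, one_pos, fun z _ w hwfr _ => ?_⟩
    by_contra hcon
    have := hmemS w hwfr hcon
    rw [hS] at this
    exact this
  · have hScpt : IsCompact S :=
      (frontier_cpt hUbdd).inter_right Metric.isOpen_ball.isClosed_compl
    have cont : Continuous fun w => gauge K (x - w) + φ w :=
      ((gauge_cont hKconv hK0).comp (continuous_const.sub continuous_id)).add hφc
    obtain ⟨w₁, hw₁S, hw₁min⟩ := hScpt.exists_isMinOn hS cont.continuousOn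
    set m := gauge K (x - w₁) + φ w₁ with hmdef
    have hm : rho K U φ x < m := by
      rcases lt_or_eq_of_le (rho_le hKconv hK0 hφc hUbdd hUfr x hw₁S.1) with h | h
      · exact h
      · exfalso
        have := huniq w₁ hw₁S.1 h
        rw [this] at hw₁S
        exact hw₁S.2 (by simpa [Metric.mem_ball] using hε)
    refine ⟨(m - rho K U φ x) / (2 * C), div_pos (by linarith) (by positivity), fun z hz w hwfr hweq => ?_⟩
    by_contra hcon
    have hwS : w ∈ S := hmemS w hwfr hcon
    have h1 : m ≤ gauge K (x - w) + φ w := hw₁min hwS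
    have h2 : gauge K (x - w) - gauge K (z - w) ≤ gauge K (x - z) := by
      have := gauge_sub_le' hKconv hK0 (x - w) (z - w)
      rwa [sub_sub_sub_cancel_right] at this
    have h3 : rho K U φ z - rho K U φ x ≤ gauge K (z - x) :=
      rho_sub_le hKconv hK0 hφc hUbdd hUfr x z
    have h4 : gauge K (x - z) ≤ C * ‖z - x‖ := by
      have := hCb (x - z)
      rwa [norm_sub_rev] at this
    have h5 : gauge K (z - x) ≤ C * ‖z - x‖ := hCb (z - x)
    -- m ≤ γ(x-w)+φw ≤ γ(z-w)+φw + γ(x-z) = rho z + γ(x-z) ≤ rho x + γ(z-x)+γ(x-z)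
    have : m - rho K U φ x ≤ 2 * C * ‖z - x‖ := by
      rw [hweq] at h3
      linarith
    have hlt : 2 * C * ‖z - x‖ < 2 * C * ((m - rho K U φ x) / (2 * C)) := by
      apply mul_lt_mul_of_pos_left hz (by positivity)
    rw [mul_div_cancel₀ _ (by positivity : (2:ℝ) * C ≠ 0)] at hlt
    linarith

end RhoStab
section RhoDiff

variable {n : ℕ} {K U : Set (Euc n)} {φ : Euc n → ℝ}

lemma rho_hasFDerivAt_of_unique (hKconv : Convex ℝ K)
    (hK0 : (0 : Euc n) ∈ interior K)
    (hKC1 : ContDiffOn ℝ 1 (gauge K) {(0 : Euc n)}ᶜ)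
    (hUopen : IsOpen U) (hUbdd : Bornology.IsBounded U) (hUfr : (frontier U).Nonempty)
    (hφc : Continuous φ)
    {x y : Euc n} (hx : x ∈ U) (hy : y ∈ frontier U)
    (heq : rho K U φ x = gauge K (x - y) + φ y)
    (huniq : ∀ w ∈ frontier U, rho K U φ x = gauge K (x - w) + φ w → w = y) :
    HasFDerivAt (rho K U φ) (fderiv ℝ (gauge K) (x - y)) x := by
  have hxy := mem_frontier_ne hUopen hx hy
  set L := fderiv ℝ (gauge K) (x - y) with hLdef
  rw [hasFDerivAt_iff_isLittleO_nhds_zero, Asymptotics.isLittleO_iff]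
  intro c hc
  have hup : HasFDerivAt (fun z => gauge K (z - y) + φ y) L x :=
    rho_hasFDerivAt_upper hKC1 hxy
  have hupo := Asymptotics.isLittleO_iff.mp
    (hasFDerivAt_iff_isLittleO_nhds_zero.mp hup) hc
  have hfc : ContinuousOn (fun u => fderiv ℝ (gauge K) u) {(0 : Euc n)}ᶜ :=
    hKC1.continuousOn_fderiv_of_isOpen isOpen_compl_singleton le_rfl
  have hfca : ContinuousAt (fun u => fderiv ℝ (gauge K) u) (x - y) :=
    hfc.continuousAt (isOpen_compl_singleton.mem_nhds hxy)
  obtain ⟨η, hη, hηb⟩ := Metric.continuousAt_iff.mp hfca c hc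
  obtain ⟨δ, hδ, hδb⟩ := min_stability hKconv hK0 hUbdd hUfr hφc hy huniq hη
  have hball : ∀ᶠ h : Euc n in 𝓝 0, ‖h‖ < δ := by
    filter_upwards [Metric.ball_mem_nhds (0 : Euc n) hδ] with h hh
    simpa [dist_eq_norm] using hh
  filter_upwards [hball, hupo] with h hhδ hhup
  set z := x + h with hzdef
  have hzx : z - x = h := by simp [hzdef]
  obtain ⟨w, hwfr, hweq, hwmin⟩ := rho_exists_min hKconv hK0 hφc hUbdd hUfr z
  have hwy : ‖w - y‖ < η := hδb z (by rw [hzx]; exact hhδ) w hwfr hweq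
  have hxw : x - w ≠ 0 := mem_frontier_ne hUopen hx hwfr
  set Lw := fderiv ℝ (gauge K) (x - w) with hLwdef
  have hLwc : ‖Lw - L‖ < c := by
    have hd : dist (x - w) (x - y) < η := by
      rw [dist_eq_norm]
      have : (x - w) - (x - y) = -(w - y) := by abel
      rw [this, norm_neg]
      exact hwy
    have := hηb hd
    rwa [dist_eq_norm] at this
  -- upper bound
  have hub : rho K U φ z - rho K U φ x - L h ≤ c * ‖h‖ := by
    have h1 : rho K U φ z ≤ gauge K (z - y) + φ y :=
      rho_le hKconv hK0 hφc hUbdd hUfr z hy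
    have h2 : gauge K (x + h - y) + φ y - (gauge K (x - y) + φ y) - L h ≤ c * ‖h‖ :=
      le_trans (le_abs_self _) hhup
    rw [heq]
    have hzy : z - y = x + h - y := by rw [hzdef]
    linarith [hzy ▸ h1]
  -- lower bound
  have hlb : -(c * ‖h‖) ≤ rho K U φ z - rho K U φ x - L h := by
    have hγw : HasFDerivAt (gauge K) Lw (x - w) := gauge_hasFDerivAt hKC1 hxw
    have hsupp := gauge_support hKconv hK0 hγw (z - w)
    have hzw : (z - w) - (x - w) = h := by rw [hzdef]; abel
    rw [sub_sub_sub_cancel_right, hzx] at hsupp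
    have hxle : rho K U φ x ≤ gauge K (x - w) + φ w :=
      rho_le hKconv hK0 hφc hUbdd hUfr x hwfr
    have h1 : rho K U φ x + Lw h ≤ rho K U φ z := by rw [hweq]; linarith
    have hop : ‖(Lw - L) h‖ ≤ ‖Lw - L‖ * ‖h‖ := (Lw - L).le_opNorm h
    have happ : (Lw - L) h = Lw h - L h := ContinuousLinearMap.sub_apply Lw L h
    rw [happ, Real.norm_eq_abs] at hop
    have habs := abs_le.mp hop
    have hnn : (0:ℝ) ≤ ‖h‖ := norm_nonneg h
    nlinarith [habs.1, habs.2]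
  rw [Real.norm_eq_abs, abs_le]
  exact ⟨hlb, hub⟩

end RhoDiff
/-- `ρ` is differentiable at `x ∈ U` if and only if `x` has a unique
`ρ`-closest point `y` on `∂U`; and in that case `∇ρ(x) = ∇γ(x − y)`, which is nonzero. -/
theorem rho_differentiableAt_iff_unique_closest {n : ℕ}
    (K : Set (Euc n)) (hKcpt : IsCompact K) (hKconv : Convex ℝ K)
    (hK0 : (0 : Euc n) ∈ interior K) (hKstrict : StrictlyConvexGauge K)
    (hKC1 : ContDiffOn ℝ 1 (gauge K) {(0 : Euc n)}ᶜ)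
    (U : Set (Euc n)) (hUopen : IsOpen U) (hUbdd : Bornology.IsBounded U)
    (hUfr : (frontier U).Nonempty)
    (φ : Euc n → ℝ) (hφ : ContDiff ℝ 1 φ) (hφlip : StrictLipschitzWrt K φ)
    (x : Euc n) (hx : x ∈ U) :
    (DifferentiableAt ℝ (rho K U φ) x ↔
      (∃! y : Euc n, y ∈ frontier U ∧ rho K U φ x = gauge K (x - y) + φ y)) ∧
    (∀ y : Euc n, y ∈ frontier U → rho K U φ x = gauge K (x - y) + φ y →
      DifferentiableAt ℝ (rho K U φ) x →
        gradient (rho K U φ) x = gradient (gauge K) (x - y) ∧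
        gradient (rho K U φ) x ≠ 0) := by
  have hφc : Continuous φ := hφ.continuous
  constructor
  · constructor
    · intro hdiff
      obtain ⟨y, hyfr, heq, hmin⟩ := rho_exists_min hKconv hK0 hφc hUbdd hUfr x
      refine ⟨y, ⟨hyfr, heq⟩, ?_⟩
      rintro w ⟨hwfr, hweq⟩
      exact unique_min hKcpt hKconv hK0 hKstrict hKC1 hUopen hUbdd hUfr hφc hφlip
        hx hdiff hwfr hyfr hweq heq
    · rintro ⟨y, ⟨hyfr, heq⟩, hun⟩
      have huniq : ∀ w ∈ frontier U, rho K U φ x = gauge K (x - w) + φ w → w = y :=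
        fun w hw hwe => hun w ⟨hw, hwe⟩
      exact (rho_hasFDerivAt_of_unique hKconv hK0 hKC1 hUopen hUbdd hUfr hφc
        hx hyfr heq huniq).differentiableAt
  · intro y hyfr heq hdiff
    have hxy := mem_frontier_ne hUopen hx hyfr
    have hLr := fderiv_rho_eq hKconv hK0 hKC1 hUopen hUbdd hUfr hφc hx hyfr heq
      hdiff.hasFDerivAt
    constructor
    · unfold gradient
      rw [hLr]
    · intro h0
      have hf0 : fderiv ℝ (rho K U φ) x = 0 := by
        have h1 := congrArg (InnerProductSpace.toDual ℝ (Euc n)) h0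
        simpa [gradient] using h1
      have hγ := gauge_hasFDerivAt hKC1 hxy
      have he := gauge_euler hγ
      have hpos := gauge_pos'' hKcpt hK0 hxy
      rw [← hLr, hf0] at he
      simp at he
      linarith
end
end

section
/- Let K ⊆ ℝⁿ be a compact convex set with 0 in its interior, γ its gauge and K° its polar, let U ⊆ ℝⁿ be a bounded open set with nonempty boundary, and let φ : ℝⁿ → ℝ be continuous and satisfy the Lipschitz property −γ(y − x) ≤ φ(x) − φ(y) ≤ γ(x − y) for all x, y. Let v : closure(U) → ℝ be a Lipschitz function with v = φ on ∂U whose gradient satisfies ∇v(x) ∈ K° for almost every x ∈ U. Then −ρ̄(x) ≤ v(x) ≤ ρ(x) for every x ∈ closure(U). -/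
open Set Filter Topology MeasureTheory
open scoped NNReal

noncomputable section

lemma growth_aux {g : ℝ → ℝ} {L : ℝ≥0} (hg : LipschitzWith L g) {c : ℝ} (hc : 0 ≤ c)
    (h : ∀ᵐ t : ℝ, t ∈ Set.Icc (0:ℝ) 1 → ∃ d ≤ c, HasDerivAt g d t) :
    g 1 - g 0 ≤ c := by
  refine le_of_forall_pos_le_add fun ε hε => ?_
  set M : ℝ := (L : ℝ) + |c| + 1 with hM
  have hMpos : 0 < M := by positivity
  -- null bad set
  have hN : volume {t : ℝ | ¬ (t ∈ Set.Icc (0:ℝ) 1 → ∃ d ≤ c, HasDerivAt g d t)} = 0 :=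
    ae_iff.1 h
  obtain ⟨O, hNO, hOopen, hOvol⟩ :=
    Set.exists_isOpen_lt_of_lt _ (ENNReal.ofReal (ε / (2 * M)))
      (by rw [hN]; exact ENNReal.ofReal_pos.2 (by positivity))
  have hOfin : volume O < ⊤ := hOvol.trans_le le_top
  set m : ℝ → ℝ := fun t => (volume (O ∩ Set.Ioo 0 t)).toReal with hm
  have hfin : ∀ t, volume (O ∩ Set.Ioo 0 t) ≠ ⊤ :=
    fun t => ((measure_mono inter_subset_left).trans_lt hOfin).ne
  have hmono : ∀ {t t' : ℝ}, t ≤ t' → m t ≤ m t' := by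
    intro t t' htt
    exact ENNReal.toReal_mono (hfin t')
      (measure_mono (inter_subset_inter_right _ (Ioo_subset_Ioo le_rfl htt)))
  have hlip : ∀ {t t' : ℝ}, t ≤ t' → m t' ≤ m t + (t' - t) := by
    intro t t' htt
    have hsub : O ∩ Set.Ioo 0 t' ⊆ (O ∩ Set.Ioo 0 t) ∪ Set.Ico t t' := by
      rintro x ⟨hxO, hx0, hxt'⟩
      rcases lt_or_ge x t with hx | hx
      · exact Or.inl ⟨hxO, hx0, hx⟩
      · exact Or.inr ⟨hx, hxt'⟩
    calc m t' ≤ ((volume (O ∩ Set.Ioo 0 t)) + volume (Set.Ico t t')).toReal := by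
          refine ENNReal.toReal_mono ?_ ((measure_mono hsub).trans (measure_union_le _ _))
          simp [ENNReal.add_ne_top, hfin t, Real.volume_Ico]
      _ = m t + (t' - t) := by
          rw [ENNReal.toReal_add (hfin t) (by simp [Real.volume_Ico]), Real.volume_Ico,
            ENNReal.toReal_ofReal (by linarith)]
  have hmcont : Continuous m := by
    refine LipschitzWith.continuous (K := 1) (LipschitzWith.of_dist_le_mul fun t t' => ?_)
    simp only [NNReal.coe_one, one_mul, Real.dist_eq]
    rcases le_total t t' with htt | htt
    · have h1 := hlip htt; have h2 := hmono htt
      rw [abs_of_nonpos (by linarith), abs_of_nonpos (by linarith)]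
      linarith
    · have h1 := hlip htt; have h2 := hmono htt
      rw [abs_of_nonneg (by linarith), abs_of_nonneg (by linarith)]
      linarith
  set S : Set ℝ := {t ∈ Set.Icc (0:ℝ) 1 | g t - g 0 ≤ (c + ε/2) * t + M * m t} with hS
  have hSclosed : IsClosed S := by
    have : S = Set.Icc (0:ℝ) 1 ∩ (fun t => g t - g 0 - ((c + ε/2) * t + M * m t)) ⁻¹' Set.Iic 0 := by
      ext t; simp only [hS, Set.mem_setOf_eq, Set.mem_inter_iff, Set.mem_preimage, Set.mem_Iic, sub_nonpos]
    rw [this]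
    refine isClosed_Icc.inter (IsClosed.preimage ?_ isClosed_Iic)
    exact (hg.continuous.sub continuous_const).sub
      ((continuous_const.mul continuous_id).add (continuous_const.mul hmcont))
  have h0S : (0:ℝ) ∈ S := by
    constructor
    · exact ⟨le_rfl, zero_le_one⟩
    · simp [hm]
  have hSbdd : BddAbove S := ⟨1, fun t ht => ht.1.2⟩
  set T := sSup S with hT
  have hTS : T ∈ S := hSclosed.csSup_mem ⟨0, h0S⟩ hSbdd
  have hT0 : 0 ≤ T := le_csSup hSbdd h0S
  have hT1 : T ≤ 1 := hTS.1.2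
  have hTeq : T = 1 := by
    by_contra hne
    have hTlt : T < 1 := lt_of_le_of_ne hT1 hne
    -- find t' > T in S
    have : ∃ t', t' ∈ S ∧ T < t' := by
      by_cases hTO : T ∈ O
      · obtain ⟨r, hr, hball⟩ := Metric.isOpen_iff.1 hOopen T hTO
        set δ := min (r/2) (1 - T) with hδ
        have hδpos : 0 < δ := lt_min (by linarith) (by linarith)
        refine ⟨T + δ, ⟨⟨by linarith, by
            have : δ ≤ 1 - T := min_le_right _ _; linarith⟩, ?_⟩, by linarith⟩
        have hIooO : Set.Ioo T (T + δ) ⊆ O := by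
          intro x hx
          apply hball
          rw [Metric.mem_ball, Real.dist_eq, abs_of_nonneg (by linarith [hx.1])]
          have : δ ≤ r / 2 := min_le_left _ _
          linarith [hx.2]
        have hmt' : m T + δ ≤ m (T + δ) := by
          have hsub : (O ∩ Set.Ioo 0 T) ∪ Set.Ioo T (T + δ) ⊆ O ∩ Set.Ioo 0 (T + δ) := by
            rintro x (⟨hxO, hx0, hxT⟩ | hx)
            · exact ⟨hxO, hx0, by linarith⟩
            · exact ⟨hIooO hx, by constructor <;> [linarith [hx.1]; exact hx.2]⟩
          have hdisj : Disjoint (O ∩ Set.Ioo 0 T) (Set.Ioo T (T + δ)) := by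
            refine Set.disjoint_left.2 ?_
            rintro x ⟨_, _, hxT⟩ hx
            exact absurd hx.1 (not_lt.2 hxT.le)
          have := measure_mono (μ := volume) hsub
          rw [measure_union hdisj measurableSet_Ioo] at this
          have h2 : ((volume (O ∩ Set.Ioo 0 T)) + volume (Set.Ioo T (T + δ))).toReal
              ≤ m (T + δ) := ENNReal.toReal_mono (hfin _) this
          rw [ENNReal.toReal_add (hfin _) (by simp [Real.volume_Ioo]), Real.volume_Ioo,
            ENNReal.toReal_ofReal (by linarith)] at h2
          linarith
        have hgd : g (T + δ) - g T ≤ L * δ := by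
          have := hg.dist_le_mul (T + δ) T
          rw [Real.dist_eq, Real.dist_eq] at this
          have h1 : |g (T + δ) - g T| ≤ L * δ := by
            rw [show T + δ - T = δ by ring, abs_of_nonneg hδpos.le] at this
            exact this
          exact (le_abs_self _).trans h1
        have hTSb := hTS.2
        have hLM : (L:ℝ) * δ ≤ (c + ε/2) * δ + M * δ := by
          have : (0:ℝ) ≤ c + |c| := by rcases abs_cases c with ⟨h1, _⟩ | ⟨h1, _⟩ <;> linarith [abs_nonneg c]
          nlinarith
        have := hmono (le_refl (T + δ))
        nlinarith [hmt', hTSb]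
      · -- T not in O, so T is a good point
        have hTN : T ∈ Set.Icc (0:ℝ) 1 → ∃ d ≤ c, HasDerivAt g d T := by
          by_contra hbad
          exact hTO (hNO hbad)
        obtain ⟨d, hd, hderiv⟩ := hTN ⟨hT0, hT1⟩
        have hslope := hasDerivAt_iff_tendsto_slope.1 hderiv
        have hslope' : Tendsto (slope g T) (𝓝[>] T) (𝓝 d) :=
          hslope.mono_left (nhdsWithin_mono _ fun x hx => ne_of_gt hx)
        have hev : ∀ᶠ t' in 𝓝[>] T, slope g T t' < c + ε/2 := by
          apply hslope'.eventually_lt_const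
          linarith
        have hev2 : ∀ᶠ t' in 𝓝[>] T, t' ∈ Set.Ioo T 1 :=
          Ioo_mem_nhdsGT_of_mem ⟨le_rfl, hTlt⟩
        obtain ⟨t', hs, ht'⟩ := (hev.and hev2).exists
        refine ⟨t', ⟨⟨by linarith [ht'.1], ht'.2.le⟩, ?_⟩, ht'.1⟩
        have hgt : g t' - g T ≤ (c + ε/2) * (t' - T) := by
          have hpos : 0 < t' - T := by linarith [ht'.1]
          have : slope g T t' = (g t' - g T) / (t' - T) := by
            rw [slope_def_field]
          rw [this] at hs
          calc g t' - g T = (g t' - g T) / (t' - T) * (t' - T) := by field_simp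
            _ ≤ (c + ε/2) * (t' - T) := mul_le_mul_of_nonneg_right hs.le hpos.le
        have hmm : m T ≤ m t' := hmono ht'.1.le
        have hTSb := hTS.2
        nlinarith
    obtain ⟨t', ht'S, ht'gt⟩ := this
    exact absurd (le_csSup hSbdd ht'S) (not_le.2 ht'gt)
  -- conclude
  have hfinal := hTS.2
  rw [hTeq] at hfinal
  have hm1 : m 1 ≤ ε / (2 * M) := by
    have h1 : volume (O ∩ Set.Ioo 0 1) ≤ ENNReal.ofReal (ε / (2 * M)) :=
      (measure_mono inter_subset_left).trans hOvol.le
    calc m 1 ≤ (ENNReal.ofReal (ε / (2 * M))).toReal := ENNReal.toReal_mono (by simp) h1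
      _ = ε / (2 * M) := ENNReal.toReal_ofReal (by positivity)
  have hmul : M * m 1 ≤ M * (ε / (2 * M)) := mul_le_mul_of_nonneg_left hm1 hMpos.le
  have hMne : M ≠ 0 := hMpos.ne'
  have heq : M * (ε / (2 * M)) = ε / 2 := by field_simp
  linarith

lemma inner_le_gauge {n : ℕ} {K : Set (Euc n)} (hKconv : Convex ℝ K)
    (hK0 : (0 : Euc n) ∈ interior K) {w : Euc n} (hw : w ∈ polarSet K) (u : Euc n) :
    rinner w u ≤ gauge K u := by
  have h0K : (0 : Euc n) ∈ K := interior_subset hK0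
  have habs : Absorbent ℝ K := absorbent_nhds_zero (mem_interior_iff_mem_nhds.1 hK0)
  by_contra hcon
  push_neg at hcon
  set r : ℝ := (gauge K u + rinner w u) / 2 with hr
  have hgr : gauge K u < r := by rw [hr]; linarith
  have hrlt : r < rinner w u := by rw [hr]; linarith
  have hrpos : 0 < r := lt_of_le_of_lt (gauge_nonneg u) hgr
  have hmem : r⁻¹ • u ∈ K := by
    apply gauge_lt_one_subset_self hKconv h0K habs
    have : gauge K (r⁻¹ • u) = r⁻¹ * gauge K u :=
      gauge_smul_of_nonneg (inv_nonneg.2 hrpos.le) u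
    rw [Set.mem_setOf_eq, this]
    rw [inv_mul_lt_iff₀ hrpos, mul_one]
    exact hgr
  have := hw _ hmem
  rw [rinner, real_inner_smul_right] at this
  have : rinner w u ≤ r := by
    have h2 := mul_le_mul_of_nonneg_left this hrpos.le
    rw [mul_one, ← mul_assoc, mul_inv_cancel₀ hrpos.ne', one_mul] at h2
    exact h2
  linarith

set_option maxHeartbeats 1000000 in
lemma key_step {n : ℕ} {K : Set (Euc n)} (hKconv : Convex ℝ K)
    (hK0 : (0 : Euc n) ∈ interior K)
    {U : Set (Euc n)} (hUopen : IsOpen U)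
    {v : Euc n → ℝ} {L : ℝ≥0} (hvlip : LipschitzOnWith L v (closure U))
    (hvgrad : ∀ᵐ x : Euc n, x ∈ U → DifferentiableAt ℝ v x ∧ gradient v x ∈ polarSet K)
    {a b : Euc n} (hseg : ∀ t : ℝ, t ∈ Set.Icc (0:ℝ) 1 → a + t • (b - a) ∈ U) :
    v b - v a ≤ gauge K (b - a) := by
  classical
  set u : Euc n := b - a with hu
  -- thickening radius
  have hcont : Continuous (fun t : ℝ => a + t • u) := by fun_prop
  have hsegcpt : IsCompact ((fun t : ℝ => a + t • u) '' Set.Icc 0 1) :=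
    isCompact_Icc.image hcont
  have hsegsub : (fun t : ℝ => a + t • u) '' Set.Icc 0 1 ⊆ U := by
    rintro _ ⟨t, ht, rfl⟩; exact hseg t ht
  obtain ⟨r, hrpos, hthick⟩ := hsegcpt.exists_thickening_subset_open hUopen hsegsub
  -- measurable full set of good points
  obtain ⟨N, hNsub, hNmeas, hN0⟩ := exists_measurable_superset_of_null (ae_iff.1 hvgrad)
  set s : Set (Euc n) := Nᶜ with hs
  have hsmeas : MeasurableSet s := hNmeas.compl
  have hsae : ∀ᵐ x : Euc n, x ∈ s := by
    rw [ae_iff]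
    simpa [hs] using hN0
  have hsgood : ∀ x ∈ s, x ∈ U → DifferentiableAt ℝ v x ∧ gradient v x ∈ polarSet K := by
    intro x hxs hxU
    by_contra hbad
    exact hxs (hNsub fun h => hbad (h hxU))
  -- Fubini disintegration along direction u
  have hae : ∀ᵐ y : Euc n, ∀ᵐ t : ℝ, y + t • u ∈ s := by
    have := (MeasureTheory.ae_ae_add_linearMap_mem_iff
      (LinearMap.toSpanSingleton ℝ (Euc n) u) volume volume hsmeas).2 hsae
    simpa [LinearMap.toSpanSingleton_apply] using this
  refine le_of_forall_pos_le_add fun ε hε => ?_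
  set δ : ℝ := min (r / (4 * (1 + ‖u‖))) (ε / (2 * ((L : ℝ) + 1))) with hδ
  have hδpos : 0 < δ := lt_min (by positivity) (by positivity)
  have hδr : δ * (1 + ‖u‖) ≤ r / 4 := by
    have h1 : δ ≤ r / (4 * (1 + ‖u‖)) := min_le_left _ _
    have h2 : (0:ℝ) < 1 + ‖u‖ := by positivity
    rw [div_mul_eq_div_div] at h1
    calc δ * (1 + ‖u‖) ≤ r / 4 / (1 + ‖u‖) * (1 + ‖u‖) :=
          mul_le_mul_of_nonneg_right h1 h2.le
      _ = r / 4 := by field_simp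
  have hδε : δ * ((L : ℝ) + 1) ≤ ε / 2 := by
    have h1 : δ ≤ ε / (2 * ((L : ℝ) + 1)) := min_le_right _ _
    have h2 : (0:ℝ) < (L : ℝ) + 1 := by positivity
    rw [div_mul_eq_div_div] at h1
    calc δ * ((L:ℝ) + 1) ≤ ε / 2 / ((L:ℝ) + 1) * ((L:ℝ) + 1) :=
          mul_le_mul_of_nonneg_right h1 h2.le
      _ = ε / 2 := by field_simp
  -- pick a good base point y near a
  obtain ⟨y, hyball, hy⟩ : ∃ y : Euc n, dist y a < δ ∧ ∀ᵐ t : ℝ, y + t • u ∈ s := by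
    by_contra hcon
    push_neg at hcon
    have hsub : Metric.ball a δ ⊆ {y : Euc n | ¬ ∀ᵐ t : ℝ, y + t • u ∈ s} := by
      intro y hy
      exact Filter.not_eventually.2 <| hcon y (by rwa [Metric.mem_ball] at hy)
    have h0 : volume {y : Euc n | ¬ ∀ᵐ t : ℝ, y + t • u ∈ s} = 0 := ae_iff.1 hae
    have := (measure_mono hsub).trans_eq h0
    exact absurd (le_antisymm this zero_le) (Metric.measure_ball_pos volume a hδpos).ne'
  -- all translated points lie in U
  have hpU : ∀ t ∈ Set.Icc (-δ) (1 + δ), y + t • u ∈ U := by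
    intro t ht
    apply hthick
    set c : ℝ := max 0 (min 1 t) with hc
    have hcI : c ∈ Set.Icc (0:ℝ) 1 :=
      ⟨le_max_left _ _, max_le zero_le_one (min_le_left _ _)⟩
    have hct : |t - c| ≤ δ := by
      rcases le_total 1 t with h | h
      · rw [hc, min_eq_left h, max_eq_right (zero_le_one)]
        rw [abs_of_nonneg (by linarith)]
        linarith [ht.2]
      · rcases le_total t 0 with h' | h'
        · rw [hc, min_eq_right h, max_eq_left h']
          rw [abs_of_nonpos (by linarith)]
          linarith [ht.1]
        · rw [hc, min_eq_right h, max_eq_right h']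
          simp [hδpos.le]
    rw [Metric.mem_thickening_iff]
    refine ⟨a + c • u, ⟨c, hcI, rfl⟩, ?_⟩
    have hdist : dist (y + t • u) (a + c • u) ≤ dist y a + |t - c| * ‖u‖ := by
      have e1 : y + t • u - (a + t • u) = y - a := by abel
      have e2 : a + t • u - (a + c • u) = (t - c) • u := by rw [sub_smul]; abel
      calc dist (y + t • u) (a + c • u)
          ≤ dist (y + t • u) (a + t • u) + dist (a + t • u) (a + c • u) := dist_triangle _ _ _
        _ = dist y a + |t - c| * ‖u‖ := by
            rw [dist_eq_norm, dist_eq_norm, dist_eq_norm, e1, e2, norm_smul, Real.norm_eq_abs]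
    have : dist y a + |t - c| * ‖u‖ < δ + δ * ‖u‖ := by
      have hn : (0:ℝ) ≤ ‖u‖ := norm_nonneg u
      have := mul_le_mul_of_nonneg_right hct hn
      nlinarith
    have hd : δ + δ * ‖u‖ ≤ r / 4 := by nlinarith [hδr]
    linarith [hdist, hrpos]
  -- Lipschitz of the restricted function
  set g : ℝ → ℝ := fun t => v (y + t • u) with hg
  have hline : LipschitzWith ‖u‖₊ (fun t : ℝ => y + t • u) := by
    apply LipschitzWith.of_dist_le_mul
    intro t t'
    rw [dist_eq_norm, dist_eq_norm, add_sub_add_left_eq_sub, ← sub_smul, norm_smul,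
      Real.norm_eq_abs, coe_nnnorm, mul_comm]
  have hglip : LipschitzOnWith (L * ‖u‖₊) g (Set.Icc (-δ) (1 + δ)) :=
    hvlip.comp (hline.lipschitzOnWith (s := Set.Icc (-δ) (1 + δ)))
      fun t ht => subset_closure (hpU t ht)
  obtain ⟨G, hGlip, hGeq⟩ := hglip.extend_real
  -- a.e. derivative bound for G on [0,1]
  have hGd : ∀ᵐ t : ℝ, t ∈ Set.Icc (0:ℝ) 1 → ∃ d ≤ gauge K u, HasDerivAt G d t := by
    filter_upwards [hy] with t hts htI
    have htU : y + t • u ∈ U := hpU t ⟨by linarith [htI.1], by linarith [htI.2]⟩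
    obtain ⟨hdiff, hgrad⟩ := hsgood _ hts htU
    refine ⟨rinner (gradient v (y + t • u)) u, inner_le_gauge hKconv hK0 hgrad u, ?_⟩
    have hl : HasDerivAt (fun τ : ℝ => y + τ • u) u t := by
      simpa using ((hasDerivAt_id t).smul_const u).const_add y
    have hF : HasFDerivAt v (InnerProductSpace.toDual ℝ (Euc n) (gradient v (y + t • u)))
        (y + t • u) := hdiff.hasGradientAt.hasFDerivAt
    have hcomp : HasDerivAt (fun τ => v (y + τ • u))
        (InnerProductSpace.toDual ℝ (Euc n) (gradient v (y + t • u)) u) t :=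
      hF.comp_hasDerivAt t hl
    rw [InnerProductSpace.toDual_apply_apply] at hcomp
    apply hcomp.congr_of_eventuallyEq
    have hmem : Set.Icc (-δ) (1 + δ) ∈ 𝓝 t :=
      Icc_mem_nhds (by linarith [htI.1]) (by linarith [htI.2])
    exact Filter.eventuallyEq_of_mem hmem hGeq.symm
  have hgrowth : G 1 - G 0 ≤ gauge K u := growth_aux hGlip (gauge_nonneg u) hGd
  have hG0 : G 0 = v y := by
    have := (hGeq (show (0:ℝ) ∈ Set.Icc (-δ) (1+δ) by constructor <;> linarith)).symm
    simpa [hg] using this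
  have hG1 : G 1 = v (y + u) := by
    have := (hGeq (show (1:ℝ) ∈ Set.Icc (-δ) (1+δ) by constructor <;> linarith)).symm
    simpa [hg] using this
  -- endpoint memberships
  have hyU : y ∈ U := by simpa using hpU 0 ⟨by linarith, by linarith⟩
  have haU : a ∈ U := by simpa using hseg 0 ⟨le_rfl, zero_le_one⟩
  have hyuU : y + u ∈ U := by simpa using hpU 1 ⟨by linarith, by linarith⟩
  have hbU : b ∈ U := by
    have := hseg 1 ⟨zero_le_one, le_rfl⟩
    simpa [hu] using this
  have hya : dist (v y) (v a) ≤ L * dist y a :=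
    hvlip.dist_le_mul _ (subset_closure hyU) _ (subset_closure haU)
  have hyb : dist (v (y + u)) (v b) ≤ L * dist (y + u) b :=
    hvlip.dist_le_mul _ (subset_closure hyuU) _ (subset_closure hbU)
  have hab : y + u - b = y - a := by rw [hu]; abel
  have hdyb : dist (y + u) b = dist y a := by
    rw [dist_eq_norm, dist_eq_norm, hab]
  have h1 : |v y - v a| ≤ (L : ℝ) * δ := by
    rw [← Real.dist_eq]
    exact hya.trans (mul_le_mul_of_nonneg_left hyball.le L.coe_nonneg)
  have h2 : |v (y + u) - v b| ≤ (L : ℝ) * δ := by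
    rw [← Real.dist_eq]
    refine hyb.trans ?_
    rw [hdyb]
    exact mul_le_mul_of_nonneg_left hyball.le L.coe_nonneg
  have habs1 := abs_le.1 h1
  have habs2 := abs_le.1 h2
  have hLδ : 2 * ((L:ℝ) * δ) ≤ ε := by
    have e1 : (L:ℝ) * δ ≤ δ * ((L:ℝ) + 1) := by nlinarith [hδpos.le]
    linarith [hδε]
  rw [hG0, hG1] at hgrowth
  linarith [habs1.1, habs2.1, hgrowth]

lemma key_step' {n : ℕ} {K : Set (Euc n)} (hKconv : Convex ℝ K)
    (hK0 : (0 : Euc n) ∈ interior K)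
    {U : Set (Euc n)} (hUopen : IsOpen U)
    {v : Euc n → ℝ} {L : ℝ≥0} (hvlip : LipschitzOnWith L v (closure U))
    (hvgrad : ∀ᵐ x : Euc n, x ∈ U → DifferentiableAt ℝ v x ∧ gradient v x ∈ polarSet K)
    {a b : Euc n} (ha : a ∈ closure U) (hb : b ∈ closure U)
    (hseg : ∀ t : ℝ, t ∈ Set.Ioo (0:ℝ) 1 → a + t • (b - a) ∈ U) :
    v b - v a ≤ gauge K (b - a) := by
  rcases eq_or_ne a b with rfl | hab
  · simpa using gauge_nonneg (a - a)
  refine le_of_forall_pos_le_add fun ε hε => ?_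
  set w : Euc n := b - a with hw
  set σ : ℝ := min (1/4) (ε / (2 * ((L : ℝ) + 1) * (‖w‖ + 1))) with hσ
  have hσpos : 0 < σ := lt_min (by norm_num) (by positivity)
  have hσ4 : σ ≤ 1/4 := min_le_left _ _
  set a' : Euc n := a + σ • w with ha'
  set b' : Euc n := a + (1 - σ) • w with hb'
  have hb'a' : b' - a' = (1 - 2*σ) • w := by
    rw [ha', hb']
    rw [add_sub_add_left_eq_sub, ← sub_smul]
    norm_num
    module
  have hsub : ∀ t : ℝ, t ∈ Set.Icc (0:ℝ) 1 → a' + t • (b' - a') ∈ U := by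
    intro t ht
    have : a' + t • (b' - a') = a + (σ + t * (1 - 2*σ)) • w := by
      rw [hb'a', ha', smul_smul, add_assoc, ← add_smul]
    rw [this]
    apply hseg
    constructor
    · nlinarith [ht.1, ht.2]
    · nlinarith [ht.1, ht.2]
  have hmain := key_step hKconv hK0 hUopen hvlip hvgrad hsub
  rw [hb'a'] at hmain
  have hgsm : gauge K ((1 - 2*σ) • w) = (1 - 2*σ) * gauge K w :=
    gauge_smul_of_nonneg (by linarith) w
  have hgle : gauge K ((1 - 2*σ) • w) ≤ gauge K w := by
    rw [hgsm]
    nlinarith [gauge_nonneg (s := K) w, hσpos]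
  have ha'U : a' ∈ U := by
    have := hseg σ ⟨hσpos, by linarith⟩
    simpa [ha', hw] using this
  have hb'U : b' ∈ U := by
    have := hseg (1 - σ) ⟨by linarith, by linarith⟩
    simpa [hb', hw] using this
  have hda : dist (v a') (v a) ≤ L * dist a' a :=
    hvlip.dist_le_mul _ (subset_closure ha'U) _ ha
  have hdb : dist (v b') (v b) ≤ L * dist b' b :=
    hvlip.dist_le_mul _ (subset_closure hb'U) _ hb
  have hdista : dist a' a = σ * ‖w‖ := by
    rw [ha', dist_eq_norm, add_sub_cancel_left, norm_smul, Real.norm_eq_abs,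
      abs_of_nonneg hσpos.le]
  have hdistb : dist b' b = σ * ‖w‖ := by
    have : b' - b = -(σ • w) := by
      rw [hb', hw]
      module
    rw [dist_eq_norm, this, norm_neg, norm_smul, Real.norm_eq_abs, abs_of_nonneg hσpos.le]
  have hbound : (L:ℝ) * (σ * ‖w‖) ≤ ε / 2 := by
    have h1 : σ ≤ ε / (2 * ((L : ℝ) + 1) * (‖w‖ + 1)) := min_le_right _ _
    have h2 : (0:ℝ) < 2 * ((L : ℝ) + 1) * (‖w‖ + 1) := by positivity
    have h3 : σ * (2 * ((L : ℝ) + 1) * (‖w‖ + 1)) ≤ ε := by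
      calc σ * (2 * ((L : ℝ) + 1) * (‖w‖ + 1))
          ≤ ε / (2 * ((L : ℝ) + 1) * (‖w‖ + 1)) * (2 * ((L : ℝ) + 1) * (‖w‖ + 1)) :=
            mul_le_mul_of_nonneg_right h1 h2.le
        _ = ε := by field_simp
    nlinarith [NNReal.coe_nonneg L, norm_nonneg w, hσpos.le]
  have e1 := abs_le.1 ((Real.dist_eq _ _ ▸ hda).trans (by rw [hdista]))
  have e2 := abs_le.1 ((Real.dist_eq _ _ ▸ hdb).trans (by rw [hdistb]))
  have : v b - v a ≤ gauge K w + 2 * ((L:ℝ) * (σ * ‖w‖)) := by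
    linarith [hmain, hgle, e1.1, e1.2, e2.1, e2.2]
  linarith [hbound]

/-- any Lipschitz function `v` on `closure U` equal to `φ` on `∂U` with
`∇v ∈ K°` a.e. in `U` is squeezed between the obstacles: `-ρ̄ ≤ v ≤ ρ` on `closure U`. -/
theorem admissible_between_obstacles {n : ℕ}
    (K : Set (Euc n)) (hKcpt : IsCompact K) (hKconv : Convex ℝ K)
    (hK0 : (0 : Euc n) ∈ interior K)
    (U : Set (Euc n)) (hUopen : IsOpen U) (hUbdd : Bornology.IsBounded U)
    (hUfr : (frontier U).Nonempty)
    (φ : Euc n → ℝ) (hφcont : Continuous φ)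
    (hφlip : ∀ x y : Euc n,
      -gauge K (y - x) ≤ φ x - φ y ∧ φ x - φ y ≤ gauge K (x - y))
    (v : Euc n → ℝ)
    (hvlip : ∃ L : ℝ≥0, LipschitzOnWith L v (closure U))
    (hvbd : EqOn v φ (frontier U))
    (hvgrad : ∀ᵐ x : Euc n, x ∈ U → DifferentiableAt ℝ v x ∧ gradient v x ∈ polarSet K) :
    ∀ x ∈ closure U, -(rhoBar K U φ x) ≤ v x ∧ v x ≤ rho K U φ x := by
  obtain ⟨L, hL⟩ := hvlip
  intro x hx
  have main : ∀ z ∈ frontier U,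
      v x - φ z ≤ gauge K (x - z) ∧ φ z - v x ≤ gauge K (z - x) := by
    intro z hz
    have hznU : z ∉ U := by
      rw [hUopen.frontier_eq] at hz
      exact hz.2
    by_cases hxU : x ∈ U
    · -- first exit point along the segment from x to z
      set f : Euc n → Euc n := id with hfdef
      set p : ℝ → Euc n := fun t => x + t • (z - x) with hp
      have hpcont : Continuous p := by fun_prop
      set A : Set ℝ := Set.Icc (0:ℝ) 1 ∩ p ⁻¹' Uᶜ with hA
      have hA1 : (1:ℝ) ∈ A := by
        refine ⟨⟨zero_le_one, le_rfl⟩, ?_⟩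
        simp only [Set.mem_preimage, Set.mem_compl_iff, hp]
        convert hznU using 2
        simp
      have hAclosed : IsClosed A :=
        isClosed_Icc.inter (IsClosed.preimage hpcont hUopen.isClosed_compl)
      have hAbdd : BddBelow A := ⟨0, fun t ht => ht.1.1⟩
      set T : ℝ := sInf A with hT
      have hTA : T ∈ A := hAclosed.csInf_mem ⟨1, hA1⟩ hAbdd
      have hT0 : 0 ≤ T := hTA.1.1
      have hT1 : T ≤ 1 := hTA.1.2
      have hTnU : p T ∉ U := hTA.2
      have hTpos : 0 < T := by
        rcases hT0.lt_or_eq with h | h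
        · exact h
        · exfalso
          apply hTnU
          rw [← h]
          simpa [hp] using hxU
      have hbefore : ∀ t : ℝ, 0 ≤ t → t < T → p t ∈ U := by
        intro t ht0 htT
        by_contra hbad
        have htA : t ∈ A := ⟨⟨ht0, htT.le.trans hT1⟩, hbad⟩
        exact absurd (csInf_le hAbdd htA) (not_le.2 htT)
      set w : Euc n := p T with hwdef
      have hwcl : w ∈ closure U := by
        have htend : Tendsto p (𝓝[<] T) (𝓝 w) :=
          (hpcont.tendsto T).mono_left nhdsWithin_le_nhds
        apply mem_closure_of_tendsto htend
        filter_upwards [Ioo_mem_nhdsLT_of_mem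
          (show T ∈ Set.Ioc (0:ℝ) T from ⟨hTpos, le_rfl⟩)] with t ht
        exact hbefore t ht.1.le ht.2
      have hwfr : w ∈ frontier U := by
        rw [hUopen.frontier_eq]
        exact ⟨hwcl, hTnU⟩
      have hwx : w - x = T • (z - x) := by rw [hwdef, hp, add_sub_cancel_left]
      -- segment conditions between x and w
      have hseg1 : ∀ t : ℝ, t ∈ Set.Ioo (0:ℝ) 1 → x + t • (w - x) ∈ U := by
        intro t ht
        have : x + t • (w - x) = p (t * T) := by
          rw [hp, hwx, smul_smul]
        rw [this]
        refine hbefore _ (by nlinarith [ht.1, hTpos]) ?_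
        nlinarith [ht.2, hTpos]
      have hseg2 : ∀ t : ℝ, t ∈ Set.Ioo (0:ℝ) 1 → w + t • (x - w) ∈ U := by
        intro t ht
        have : w + t • (x - w) = p ((1 - t) * T) := by
          rw [hp, hwdef, hp]
          have : x - (x + T • (z - x)) = -(T • (z - x)) := by abel
          rw [this]
          module
        rw [this]
        refine hbefore _ (by nlinarith [ht.2, hTpos]) ?_
        nlinarith [ht.1, hTpos]
      have hxcl : x ∈ closure U := subset_closure hxU
      have hd1 : v w - v x ≤ gauge K (w - x) :=
        key_step' hKconv hK0 hUopen hL hvgrad hxcl hwcl hseg1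
      have hd2 : v x - v w ≤ gauge K (x - w) :=
        key_step' hKconv hK0 hUopen hL hvgrad hwcl hxcl hseg2
      have hvw : v w = φ w := hvbd hwfr
      -- gauge decompositions
      have hxw : x - w = T • (x - z) := by
        rw [hwdef, hp]
        module
      have hwz : w - z = (1 - T) • (x - z) := by
        rw [hwdef, hp]
        module
      have hzw : z - w = (1 - T) • (z - x) := by
        rw [hwdef, hp]
        module
      have hg1 : gauge K (x - w) = T * gauge K (x - z) := by
        rw [hxw]; exact gauge_smul_of_nonneg hT0 _
      have hg2 : gauge K (w - z) = (1 - T) * gauge K (x - z) := by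
        rw [hwz]; exact gauge_smul_of_nonneg (by linarith) _
      have hg3 : gauge K (w - x) = T * gauge K (z - x) := by
        rw [hwx]; exact gauge_smul_of_nonneg hT0 _
      have hg4 : gauge K (z - w) = (1 - T) * gauge K (z - x) := by
        rw [hzw]; exact gauge_smul_of_nonneg (by linarith) _
      constructor
      · have h1 : φ w - φ z ≤ gauge K (w - z) := (hφlip w z).2
        have : v x - φ z = (v x - v w) + (φ w - φ z) := by rw [hvw]; ring
        rw [this]
        calc (v x - v w) + (φ w - φ z) ≤ gauge K (x - w) + gauge K (w - z) :=
              add_le_add hd2 h1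
          _ = gauge K (x - z) := by rw [hg1, hg2]; ring
      · have h1 : φ z - φ w ≤ gauge K (z - w) := (hφlip z w).2
        have : φ z - v x = (φ z - φ w) + (v w - v x) := by rw [hvw]; ring
        rw [this]
        calc (φ z - φ w) + (v w - v x) ≤ gauge K (z - w) + gauge K (w - x) :=
              add_le_add h1 hd1
          _ = gauge K (z - x) := by rw [hg3, hg4]; ring
    · -- x itself lies on the boundary
      have hxf : x ∈ frontier U := by
        rw [hUopen.frontier_eq]
        exact ⟨hx, hxU⟩
      rw [hvbd hxf]
      exact ⟨(hφlip x z).2, (hφlip z x).2⟩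
  constructor
  · rw [neg_le, rhoBar]
    refine le_csInf (hUfr.image _) ?_
    rintro r ⟨z, hz, rfl⟩
    simp only
    have := (main z hz).2
    linarith
  · rw [rho]
    refine le_csInf (hUfr.image _) ?_
    rintro r ⟨z, hz, rfl⟩
    simp only
    have := (main z hz).1
    linarith
end
end
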